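/- In the unconstrained case (X = ℝⁿ), under Assumption 1 the γ-damped prediction x_{k+1|k} = x_k − ∇²ₓₓf(x_k;t_k)⁻¹ (h∇_{tx}f(x_k;t_k) + γ∇ₓf(x_k;t_k)) with γ ∈ [0,1] satisfies ‖x_{k+1|k} − x*(t_{k+1})‖ ≤ (1 − γ + γ·2L/m)‖x_k − x*(t_k)‖ + 2Δ₁, where Δ₁ = 2h(C₀/m)(1 + L/m). -/

import Mathlib

abbrev Eucl (n : ℕ) := EuclideanSpace ℝ (Fin n)

/-- Error bound for the γ-damped Newton-like prediction step in the
unconstrained case, under Assumption 1 (Proposition 4, Case a). -/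
theorem stmt_19 (n : ℕ) (f : Eucl n → ℝ → ℝ)
    (G : Eucl n → ℝ → Eucl n)                        -- ∇ₓ f
    (Hess : Eucl n ≃L[ℝ] Eucl n)                     -- ∇²ₓₓ f(x_k; t_k), invertible
    (c : Eucl n → ℝ → Eucl n)                        -- ∇ₜₓ f
    (xstar : ℝ → Eucl n) (xk : Eucl n) (m L C₀ tk h γ : ℝ)
    (hm : 0 < m) (hmL : m ≤ L) (hC₀ : 0 ≤ C₀) (hh : 0 < h)
    (hγ0 : 0 ≤ γ) (hγ1 : γ ≤ 1)
    (hgrad : ∀ x t, HasGradientAt (fun y => f y t) (G x t) x)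
    -- Hess is the Hessian of f(·; t_k) at x_k
    (hHess : HasFDerivAt (fun y => G y tk) (Hess : Eucl n →L[ℝ] Eucl n) xk)
    (hct : ∀ x t, HasDerivAt (fun s => G x s) (c x t) t)
    -- Assumption 1: m I ⪯ ∇²ₓₓ f ⪯ L I, ‖∇ₜₓ f‖ ≤ C₀
    (hstrong : ∀ t x y, m * ‖x - y‖ ^ 2 ≤ (inner ℝ (G x t - G y t) (x - y) : ℝ))
    (hHlow : ∀ v, m * ‖v‖ ^ 2 ≤ (inner ℝ v (Hess v) : ℝ))
    (hHhigh : ∀ v, ‖Hess v‖ ≤ L * ‖v‖)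
    (hlip : ∀ t x y, ‖G x t - G y t‖ ≤ L * ‖x - y‖)
    (hcbound : ∀ x t, ‖c x t‖ ≤ C₀)
    (htime : ∀ x t s, ‖G x t - G x s‖ ≤ C₀ * |t - s|)
    -- x*(t) is the unique unconstrained minimizer of f(·;t): ∇ₓf(x*(t);t) = 0
    (hmin : ∀ t, IsMinOn (fun x => f x t) Set.univ (xstar t))
    (hG0 : ∀ t, G (xstar t) t = 0) :
    ‖(xk - Hess.symm (h • c xk tk + γ • G xk tk)) - xstar (tk + h)‖ ≤
      (1 - γ + γ * (2 * L / m)) * ‖xk - xstar tk‖ +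
        2 * (2 * h * (C₀ / m) * (1 + L / m)) := by
  set d := xk - xstar tk with hd
  -- m ‖v‖ ≤ ‖Hess v‖
  have key : ∀ v : Eucl n, m * ‖v‖ ≤ ‖Hess v‖ := by
    intro v
    rcases eq_or_ne v 0 with rfl | hv
    · simp
    · have h1 := hHlow v
      have h2 : (inner ℝ v (Hess v) : ℝ) ≤ ‖v‖ * ‖Hess v‖ := real_inner_le_norm _ _
      have hv' : 0 < ‖v‖ := norm_pos_iff.mpr hv
      nlinarith
  have hsym : ∀ w : Eucl n, ‖Hess.symm w‖ ≤ ‖w‖ / m := by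
    intro w
    have h1 := key (Hess.symm w)
    rw [Hess.apply_symm_apply] at h1
    rw [le_div_iff₀ hm]
    linarith
  -- drift of the optimal solution
  have hdrift : ‖xstar tk - xstar (tk + h)‖ ≤ C₀ * h / m := by
    set w := xstar tk - xstar (tk + h) with hw
    have h1 := hstrong tk (xstar tk) (xstar (tk + h))
    have h2 : (inner ℝ (G (xstar tk) tk - G (xstar (tk + h)) tk) w : ℝ)
        = inner ℝ (G (xstar (tk + h)) (tk + h) - G (xstar (tk + h)) tk) w := by
      rw [hG0, hG0]
    have h3 : ‖G (xstar (tk + h)) (tk + h) - G (xstar (tk + h)) tk‖ ≤ C₀ * h := by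
      have := htime (xstar (tk + h)) (tk + h) tk
      simpa [abs_of_pos hh] using this
    have h4 : (inner ℝ (G (xstar (tk + h)) (tk + h) - G (xstar (tk + h)) tk) w : ℝ)
        ≤ (C₀ * h) * ‖w‖ := by
      refine le_trans (real_inner_le_norm _ _) ?_
      exact mul_le_mul_of_nonneg_right h3 (norm_nonneg w)
    rw [← hw] at h1
    rw [h2] at h1
    rcases (norm_nonneg w).eq_or_lt with h0 | h0
    · rw [← h0]; positivity
    · rw [le_div_iff₀ hm]
      nlinarith
  -- decomposition of the prediction error
  have hdecomp : (xk - Hess.symm (h • c xk tk + γ • G xk tk)) - xstar (tk + h)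
      = ((1 - γ) • d + γ • (d - Hess.symm (G xk tk)) - h • Hess.symm (c xk tk))
        + (xstar tk - xstar (tk + h)) := by
    have hlin : Hess.symm (h • c xk tk + γ • G xk tk)
        = h • Hess.symm (c xk tk) + γ • Hess.symm (G xk tk) := by
      simp [map_add, map_smul]
    rw [hlin, hd]
    module
  -- norm bounds for the pieces
  have hb1 : ‖Hess.symm (G xk tk)‖ ≤ L * ‖d‖ / m := by
    have hG : ‖G xk tk‖ ≤ L * ‖d‖ := by
      have := hlip tk xk (xstar tk)
      rw [hG0] at this
      simpa [hd] using this
    refine le_trans (hsym _) ?_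
    exact div_le_div_of_nonneg_right hG hm.le
  have hb2 : ‖Hess.symm (c xk tk)‖ ≤ C₀ / m := by
    refine le_trans (hsym _) ?_
    exact div_le_div_of_nonneg_right (hcbound xk tk) hm.le
  have htri : ‖(xk - Hess.symm (h • c xk tk + γ • G xk tk)) - xstar (tk + h)‖
      ≤ (1 - γ) * ‖d‖ + γ * ‖d - Hess.symm (G xk tk)‖ + h * ‖Hess.symm (c xk tk)‖
        + ‖xstar tk - xstar (tk + h)‖ := by
    rw [hdecomp]
    refine le_trans (norm_add_le _ _) ?_
    have t1 : ‖(1 - γ) • d + γ • (d - Hess.symm (G xk tk)) - h • Hess.symm (c xk tk)‖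
        ≤ ‖(1 - γ) • d‖ + ‖γ • (d - Hess.symm (G xk tk))‖ + ‖h • Hess.symm (c xk tk)‖ := by
      refine le_trans (norm_sub_le _ _) ?_
      exact add_le_add_left (norm_add_le _ _) _
    have e1 : ‖(1 - γ) • d‖ = (1 - γ) * ‖d‖ := by
      rw [norm_smul, Real.norm_eq_abs, abs_of_nonneg (by linarith)]
    have e2 : ‖γ • (d - Hess.symm (G xk tk))‖ = γ * ‖d - Hess.symm (G xk tk)‖ := by
      rw [norm_smul, Real.norm_eq_abs, abs_of_nonneg hγ0]
    have e3 : ‖h • Hess.symm (c xk tk)‖ = h * ‖Hess.symm (c xk tk)‖ := by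
      rw [norm_smul, Real.norm_eq_abs, abs_of_pos hh]
    rw [e1, e2, e3] at t1
    linarith
  have hb3 : ‖d - Hess.symm (G xk tk)‖ ≤ ‖d‖ + L * ‖d‖ / m :=
    le_trans (norm_sub_le _ _) (by linarith)
  have hE : (0:ℝ) ≤ ‖d‖ := norm_nonneg d
  have h1m : (1:ℝ) ≤ L / m := (one_le_div hm).mpr hmL
  have hCm : (0:ℝ) ≤ C₀ / m := div_nonneg hC₀ hm.le
  have hint1 : 0 ≤ γ * ‖d‖ * (L / m - 1) :=
    mul_nonneg (mul_nonneg hγ0 hE) (by linarith)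
  have hint2 : 0 ≤ h * (C₀ / m) * (L / m) :=
    mul_nonneg (mul_nonneg hh.le hCm) (by linarith)
  have hint3 : 0 ≤ h * (C₀ / m) := mul_nonneg hh.le hCm
  have hmain : γ * ‖d - Hess.symm (G xk tk)‖ ≤ γ * (‖d‖ + L * ‖d‖ / m) :=
    mul_le_mul_of_nonneg_left hb3 hγ0
  have hmain2 : h * ‖Hess.symm (c xk tk)‖ ≤ h * (C₀ / m) :=
    mul_le_mul_of_nonneg_left hb2 hh.le
  have hfin := htri
  have hLdm : γ * (‖d‖ + L * ‖d‖ / m) ≤ γ * (2 * L / m) * ‖d‖ := by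
    have : ‖d‖ ≤ L / m * ‖d‖ := le_mul_of_one_le_left hE h1m
    have h2 : ‖d‖ + L * ‖d‖ / m ≤ 2 * L / m * ‖d‖ := by
      have e : L * ‖d‖ / m = L / m * ‖d‖ := by ring
      have e2 : 2 * L / m * ‖d‖ = L / m * ‖d‖ + L / m * ‖d‖ := by ring
      rw [e, e2]
      linarith
    calc γ * (‖d‖ + L * ‖d‖ / m) ≤ γ * (2 * L / m * ‖d‖) :=
          mul_le_mul_of_nonneg_left h2 hγ0
      _ = γ * (2 * L / m) * ‖d‖ := by ring
  have hdr2 : C₀ * h / m + h * (C₀ / m) ≤ 2 * (2 * h * (C₀ / m) * (1 + L / m)) := by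
    have e : C₀ * h / m = h * (C₀ / m) := by ring
    nlinarith
  linarith
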